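/- Shape of the parameter regions: In the family φ_{α,β}(ζ) = ζ³ − 3α²ζ + β over L, the infraconnectedness locus C₃(L) (parameters with K infraconnected) equals B⁺₁(0) × B⁺₁(0); the shift locus contains all parameters outside C₃(L) with |α|³ ≠ |β|; and the set E^± of parameters with exactly the critical point ±α non-escaping is contained in {(α,β) : 1 < |α|³ = |β| and |∓2α³ + β| ≤ |α|}. -/

import Mathlib

open Polynomial Metric Set

/-- The filled Julia set: points whose forward orbit does not escape to infinity. -/
def filledJulia {L : Type*} [NormedField L] (φ : Polynomial L) : Set L :=
  {z | ¬ Filter.Tendsto (fun n => ‖(fun w => φ.eval w)^[n] z‖) Filter.atTop Filter.atTop}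

/-- The Julia set, the boundary of the filled Julia set. -/
def juliaSet {L : Type*} [NormedField L] (φ : Polynomial L) : Set L :=
  frontier (filledJulia φ)

/-- The standard escape radius `R_φ`. -/
noncomputable def escapeRadius {L : Type*} [NormedField L] (φ : Polynomial L) : ℝ :=
  max (‖φ.leadingCoeff⁻¹‖ ^ ((1 : ℝ) / ((φ.natDegree : ℝ) - 1)))
    (⨆ i : Finset.range φ.natDegree,
      ‖φ.coeff i / φ.leadingCoeff‖ ^ ((1 : ℝ) / ((φ.natDegree : ℝ) - (i : ℕ))))

/-- A (closed) ball of positive radius. -/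
def IsClosedBall {L : Type*} [NormedField L] (B : Set L) : Prop :=
  ∃ a : L, ∃ r : ℝ, 0 < r ∧ B = Metric.closedBall a r

/-- A dynamical ball of level `n`: a maximal closed ball inside `φ^{-n}(D₀)` where
`D₀ = B⁺_{R_φ}(0)` is the level-0 ball. -/
def IsDynBall {L : Type*} [NormedField L] (φ : Polynomial L) (n : ℕ) (B : Set L) : Prop :=
  IsClosedBall B ∧
    B ⊆ (fun z => φ.eval z)^[n] ⁻¹' (Metric.closedBall 0 (escapeRadius φ)) ∧
    ∀ B', IsClosedBall B' → B ⊆ B' →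
      B' ⊆ (fun z => φ.eval z)^[n] ⁻¹' (Metric.closedBall 0 (escapeRadius φ)) → B' = B

/-- An end: a nested sequence of dynamical balls, one of each level. -/
def IsEnd {L : Type*} [NormedField L] (φ : Polynomial L) (E : ℕ → Set L) : Prop :=
  ∀ n, IsDynBall φ n (E n) ∧ E (n + 1) ⊆ E n

/-- The local degree `deg_z(φ)`: the multiplicity of `z` as a root of `φ - φ(z)`. -/
noncomputable def localDeg {K : Type*} [CommRing K] (φ : Polynomial K) (z : K) : ℕ :=
  Polynomial.rootMultiplicity z (φ - Polynomial.C (φ.eval z))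

/-- `φ : B → B'` has a well-defined degree `d`: every point of `B'` has exactly `d`
preimages in `B` counted with local degree. -/
def HasDegOn {K : Type*} [CommRing K] (φ : Polynomial K) (B B' : Set K) (d : ℕ) : Prop :=
  1 ≤ d ∧ ∀ w ∈ B', (∑ᶠ z ∈ {z ∈ B | φ.eval z = w}, localDeg φ z) = d

/-- A set is infraconnected if it cannot be split by two disjoint closed balls. -/
def Infraconnected {L : Type*} [NormedField L] (X : Set L) : Prop :=
  ∀ (a₀ : L) (r₀ : ℝ) (a₁ : L) (r₁ : ℝ),
    Disjoint (Metric.closedBall a₀ r₀) (Metric.closedBall a₁ r₁) →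
    X ⊆ Metric.closedBall a₀ r₀ ∪ Metric.closedBall a₁ r₁ →
    X ⊆ Metric.closedBall a₀ r₀ ∨ X ⊆ Metric.closedBall a₁ r₁

/-- The infraconnected component of `z` in the filled Julia set: the intersection of all
dynamical balls containing `z`. -/
def infraComp {L : Type*} [NormedField L] (φ : Polynomial L) (z : L) : Set L :=
  {w | ∀ n B, IsDynBall φ n B → z ∈ B → w ∈ B}

/-- The `p`-th iterate of `φ` as a polynomial. -/
noncomputable def polyIter {L : Type*} [CommRing L] (φ : Polynomial L) : ℕ → Polynomial L
  | 0 => Polynomial.X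
  | n + 1 => φ.comp (polyIter φ n)

/-- The cubic family `φ_{α,β}(ζ) = ζ³ - 3α²ζ + β`. -/
noncomputable def cubic {L : Type*} [NormedField L] (α β : L) : Polynomial L :=
  Polynomial.X ^ 3 - Polynomial.C (3 * α ^ 2) * Polynomial.X + Polynomial.C β


section Helpers

variable {L : Type*} [NormedField L] [IsUltrametricDist L]

lemma cubic_eval (α β z : L) : (cubic α β).eval z = z ^ 3 - 3 * α ^ 2 * z + β := by
  simp [cubic]

lemma norm_add_eq_left' {x y : L} (h : ‖y‖ < ‖x‖) : ‖x + y‖ = ‖x‖ := by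
  rw [IsUltrametricDist.norm_add_eq_max_of_norm_ne_norm (ne_of_gt h)]
  exact max_eq_left h.le

lemma cubic_step (h3 : ‖(3 : L)‖ = 1) {α β z : L} (h1 : 1 < ‖z‖) (hα : ‖α‖ < ‖z‖)
    (hβ : ‖β‖ < ‖z‖ ^ 3) : ‖(cubic α β).eval z‖ = ‖z‖ ^ 3 := by
  have e : (cubic α β).eval z = z ^ 3 + (-(3 * α ^ 2 * z) + β) := by rw [cubic_eval]; ring
  have hz3 : ‖z ^ 3‖ = ‖z‖ ^ 3 := norm_pow z 3
  have h3a : ‖-(3 * α ^ 2 * z)‖ < ‖z‖ ^ 3 := by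
    rw [norm_neg, norm_mul, norm_mul, norm_pow, h3, one_mul]
    have hz0 : (0:ℝ) < ‖z‖ := lt_trans one_pos h1
    calc ‖α‖ ^ 2 * ‖z‖ < ‖z‖ ^ 2 * ‖z‖ :=
        mul_lt_mul_of_pos_right (pow_lt_pow_left₀ hα (norm_nonneg α) (by norm_num)) hz0
      _ = ‖z‖ ^ 3 := by ring
  have : ‖-(3 * α ^ 2 * z) + β‖ < ‖z ^ 3‖ := by
    rw [hz3]
    exact lt_of_le_of_lt (IsUltrametricDist.norm_add_le_max _ _) (max_lt h3a hβ)
  rw [e, norm_add_eq_left' this, hz3]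

lemma cubic_escape (h3 : ‖(3 : L)‖ = 1) {α β z : L} (h1 : 1 < ‖z‖) (hα : ‖α‖ < ‖z‖)
    (hβ : ‖β‖ < ‖z‖ ^ 3) : z ∉ filledJulia (cubic α β) := by
  intro hz
  apply hz
  set f : ℕ → L := fun n => (fun w => (cubic α β).eval w)^[n] z with hf
  have key : ∀ n, ‖z‖ ≤ ‖f n‖ ∧ ‖z‖ ^ (n + 1) ≤ ‖f n‖ := by
    intro n
    induction n with
    | zero => simp [f]
    | succ n ih =>
      have h1n : 1 < ‖f n‖ := lt_of_lt_of_le h1 ih.1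
      have hαn : ‖α‖ < ‖f n‖ := lt_of_lt_of_le hα ih.1
      have hβn : ‖β‖ < ‖f n‖ ^ 3 := lt_of_lt_of_le hβ
        (pow_le_pow_left₀ (norm_nonneg z) ih.1 3)
      have hstep : ‖f (n + 1)‖ = ‖f n‖ ^ 3 := by
        have : f (n + 1) = (cubic α β).eval (f n) := Function.iterate_succ_apply' _ _ _
        rw [this]
        exact cubic_step h3 h1n hαn hβn
      refine ⟨?_, ?_⟩
      · rw [hstep]; exact ih.1.trans (le_self_pow₀ h1n.le (by norm_num))
      · rw [hstep]
        calc ‖z‖ ^ (n + 1 + 1) = ‖z‖ ^ (n + 1) * ‖z‖ := by ring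
          _ ≤ ‖f n‖ * ‖f n‖ :=
              mul_le_mul ih.2 ih.1 (norm_nonneg z) (norm_nonneg _)
          _ = ‖f n‖ ^ 2 * 1 := by ring
          _ ≤ ‖f n‖ ^ 2 * ‖f n‖ := mul_le_mul_of_nonneg_left h1n.le (sq_nonneg _)
          _ = ‖f n‖ ^ 3 := by ring
  have hpow : Filter.Tendsto (fun n : ℕ => ‖z‖ ^ (n + 1)) Filter.atTop Filter.atTop :=
    (tendsto_pow_atTop_atTop_of_one_lt h1).comp (Filter.tendsto_add_atTop_nat 1)
  exact Filter.tendsto_atTop_mono (fun n => (key n).2) hpow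

lemma cubic_bounded (h3 : ‖(3 : L)‖ = 1) {α β z : L} (hα : ‖α‖ ≤ 1) (hβ : ‖β‖ ≤ 1)
    (hz : ‖z‖ ≤ 1) : z ∈ filledJulia (cubic α β) := by
  simp only [filledJulia, Set.mem_setOf_eq]
  intro ht
  have key : ∀ n, ‖(fun w => (cubic α β).eval w)^[n] z‖ ≤ 1 := by
    intro n
    induction n with
    | zero => simpa
    | succ n ih =>
      rw [Function.iterate_succ_apply']
      set w := (fun w => (cubic α β).eval w)^[n] z with hw
      have e : (cubic α β).eval w = (w ^ 3 + -(3 * α ^ 2 * w)) + β := by rw [cubic_eval]; ring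
      rw [e]
      refine le_trans (IsUltrametricDist.norm_add_le_max _ _)
        (max_le (le_trans (IsUltrametricDist.norm_add_le_max _ _) (max_le ?_ ?_)) hβ)
      · rw [norm_pow]; exact pow_le_one₀ (norm_nonneg w) ih
      · rw [norm_neg, norm_mul, norm_mul, norm_pow, h3, one_mul]
        exact mul_le_one₀ (pow_le_one₀ (norm_nonneg α) hα) (norm_nonneg w) ih
  obtain ⟨n, hn⟩ := (ht.eventually_ge_atTop 2).exists
  linarith [key n]

lemma filledJulia_next_iff (φ : Polynomial L) (z : L) :
    φ.eval z ∈ filledJulia φ ↔ z ∈ filledJulia φ := by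
  simp only [filledJulia, Set.mem_setOf_eq]
  have e : (fun n => ‖(fun w => φ.eval w)^[n] (φ.eval z)‖)
      = fun n => ‖(fun w => φ.eval w)^[n + 1] z‖ := by
    funext n
    rw [Function.iterate_succ_apply]
  rw [e]
  exact not_congr (Filter.tendsto_add_atTop_iff_nat (f := fun n => ‖(fun w => φ.eval w)^[n] z‖) 1)

lemma cubic_eval_pos (α β : L) : (cubic α β).eval α = -(2 * α ^ 3) + β := by
  rw [cubic_eval]; ring

lemma cubic_eval_neg (α β : L) : (cubic α β).eval (-α) = 2 * α ^ 3 + β := by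
  rw [cubic_eval]; ring

lemma both_escape (h2 : ‖(2 : L)‖ = 1) (h3 : ‖(3 : L)‖ = 1) {α β : L}
    (hne : ‖β‖ ≠ ‖α‖ ^ 3) (hbig : 1 < ‖α‖ ∨ 1 < ‖β‖) :
    α ∉ filledJulia (cubic α β) ∧ -α ∉ filledJulia (cubic α β) := by
  set M : ℝ := max (‖α‖ ^ 3) ‖β‖ with hM
  have hMα : ‖α‖ ^ 3 ≤ M := le_max_left _ _
  have hMβ : ‖β‖ ≤ M := le_max_right _ _
  have hM1 : 1 < M := by
    rcases hbig with h | h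
    · exact lt_of_lt_of_le (one_lt_pow₀ h (by norm_num)) hMα
    · exact lt_of_lt_of_le h hMβ
  have hMα' : ‖α‖ < M := by
    rcases le_or_gt ‖α‖ 1 with h | h
    · linarith
    · exact lt_of_lt_of_le (lt_self_pow₀ h (by norm_num)) hMα
  have hMβ' : ‖β‖ < M ^ 3 := lt_of_le_of_lt hMβ (lt_self_pow₀ hM1 (by norm_num))
  have h2a : ‖-(2 * α ^ 3)‖ = ‖α‖ ^ 3 := by
    rw [norm_neg, norm_mul, norm_pow, h2, one_mul]
  have h2b : ‖2 * α ^ 3‖ = ‖α‖ ^ 3 := by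
    rw [norm_mul, norm_pow, h2, one_mul]
  have hu : ‖(cubic α β).eval α‖ = M := by
    rw [cubic_eval_pos,
      IsUltrametricDist.norm_add_eq_max_of_norm_ne_norm (by rw [h2a]; exact (Ne.symm hne)),
      h2a]
  have hv : ‖(cubic α β).eval (-α)‖ = M := by
    rw [cubic_eval_neg,
      IsUltrametricDist.norm_add_eq_max_of_norm_ne_norm (by rw [h2b]; exact (Ne.symm hne)),
      h2b]
  constructor
  · intro hmem
    exact cubic_escape h3 (hu ▸ hM1) (hu ▸ hMα') (hu ▸ hMβ')
      ((filledJulia_next_iff _ α).mpr hmem)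
  · intro hmem
    exact cubic_escape h3 (hv ▸ hM1) (hv ▸ hMα') (hv ▸ hMβ')
      ((filledJulia_next_iff _ (-α)).mpr hmem)

lemma one_escapes (h3 : ‖(3 : L)‖ = 1) (h4 : ‖(4 : L)‖ = 1) {α β : L}
    (heq : ‖β‖ = ‖α‖ ^ 3) (hbig : 1 < ‖α‖) :
    α ∉ filledJulia (cubic α β) ∨ -α ∉ filledJulia (cubic α β) := by
  have hdiff : (cubic α β).eval (-α) - (cubic α β).eval α = 4 * α ^ 3 := by
    rw [cubic_eval_pos, cubic_eval_neg]; ring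
  have hnd : ‖α‖ ^ 3 ≤ max ‖(cubic α β).eval (-α)‖ ‖(cubic α β).eval α‖ := by
    calc ‖α‖ ^ 3 = ‖4 * α ^ 3‖ := by rw [norm_mul, norm_pow, h4, one_mul]
      _ = ‖(cubic α β).eval (-α) + -((cubic α β).eval α)‖ := by
          rw [← sub_eq_add_neg, hdiff]
      _ ≤ max ‖(cubic α β).eval (-α)‖ ‖-((cubic α β).eval α)‖ :=
          IsUltrametricDist.norm_add_le_max _ _
      _ = max ‖(cubic α β).eval (-α)‖ ‖(cubic α β).eval α‖ := by rw [norm_neg]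
  have hcond : ∀ w : L, ‖α‖ ^ 3 ≤ ‖w‖ → 1 < ‖w‖ ∧ ‖α‖ < ‖w‖ ∧ ‖β‖ < ‖w‖ ^ 3 := by
    intro w hw
    have ha3 : 1 < ‖α‖ ^ 3 := one_lt_pow₀ hbig (by norm_num)
    have haw : ‖α‖ < ‖w‖ := lt_of_lt_of_le (lt_self_pow₀ hbig (by norm_num)) hw
    refine ⟨lt_of_lt_of_le ha3 hw, haw, ?_⟩
    rw [heq]
    exact pow_lt_pow_left₀ haw (norm_nonneg α) (by norm_num)
  rcases le_max_iff.mp hnd with h | h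
  · right
    intro hmem
    obtain ⟨c1, c2, c3⟩ := hcond _ h
    exact cubic_escape h3 c1 c2 c3 ((filledJulia_next_iff _ (-α)).mpr hmem)
  · left
    intro hmem
    obtain ⟨c1, c2, c3⟩ := hcond _ h
    exact cubic_escape h3 c1 c2 c3 ((filledJulia_next_iff _ α).mpr hmem)

lemma endgame (h3 : ‖(3 : L)‖ = 1) {α β w : L} (hw : w ∈ filledJulia (cubic α β))
    (hbig : 1 < ‖α‖) (heq : ‖β‖ = ‖α‖ ^ 3) : ‖(cubic α β).eval w‖ ≤ ‖α‖ := by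
  by_contra h
  push_neg at h
  have c3 : ‖β‖ < ‖(cubic α β).eval w‖ ^ 3 := by
    rw [heq]; exact pow_lt_pow_left₀ h (norm_nonneg α) (by norm_num)
  exact cubic_escape h3 (lt_trans hbig h) h c3 ((filledJulia_next_iff _ w).mpr hw)

end Helpers

/-- **Shape of the parameter regions for cubics.** The infraconnectedness locus is the
unit bidisk; the shift locus contains all parameters outside it with `|α|³ ≠ |β|`; and
the loci `E^±` are contained in `{1 < |α|³ = |β|, |∓2α³ + β| ≤ |α|}`. -/
theorem cubic_parameter_regions {L : Type*} [NormedField L] [IsUltrametricDist L] [CompleteSpace L] [IsAlgClosed L]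
    (hdense : ∀ r : ℝ, 0 < r → ∀ ε : ℝ, 0 < ε → ∃ x : L, x ≠ 0 ∧ |‖x‖ - r| < ε)
    (hres : ∀ q : ℚ, q ≠ 0 → ‖(q : L)‖ = 1) :
    ({q : L × L | q.1 ∈ filledJulia (cubic q.1 q.2) ∧ -q.1 ∈ filledJulia (cubic q.1 q.2)}
        = Metric.closedBall (0 : L) 1 ×ˢ Metric.closedBall (0 : L) 1) ∧
    ({q : L × L | q.1 ∉ filledJulia (cubic q.1 q.2) ∧ -q.1 ∉ filledJulia (cubic q.1 q.2)}
        ⊇ {q : L × L | ¬ (q.1 ∈ filledJulia (cubic q.1 q.2) ∧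
              -q.1 ∈ filledJulia (cubic q.1 q.2)) ∧ ‖q.1‖ ^ 3 ≠ ‖q.2‖}) ∧
    ({q : L × L | q.1 ∈ filledJulia (cubic q.1 q.2) ∧ -q.1 ∉ filledJulia (cubic q.1 q.2)}
        ⊆ {q : L × L | 1 < ‖q.1‖ ^ 3 ∧ ‖q.1‖ ^ 3 = ‖q.2‖ ∧
              ‖-(2 * q.1 ^ 3) + q.2‖ ≤ ‖q.1‖}) ∧
    ({q : L × L | -q.1 ∈ filledJulia (cubic q.1 q.2) ∧ q.1 ∉ filledJulia (cubic q.1 q.2)}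
        ⊆ {q : L × L | 1 < ‖q.1‖ ^ 3 ∧ ‖q.1‖ ^ 3 = ‖q.2‖ ∧
              ‖2 * q.1 ^ 3 + q.2‖ ≤ ‖q.1‖}) := by
  have h2 : ‖(2 : L)‖ = 1 := by
    have := hres 2 (by norm_num)
    push_cast at this
    exact this
  have h3 : ‖(3 : L)‖ = 1 := by
    have := hres 3 (by norm_num)
    push_cast at this
    exact this
  have h4 : ‖(4 : L)‖ = 1 := by
    have := hres 4 (by norm_num)
    push_cast at this
    exact this
  -- key dichotomy: if not both in the bidisk, there is a big coordinate
  have bidisk : ∀ α β : L, ‖α‖ ≤ 1 → ‖β‖ ≤ 1 →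
      α ∈ filledJulia (cubic α β) ∧ -α ∈ filledJulia (cubic α β) := by
    intro α β hα hβ
    exact ⟨cubic_bounded h3 hα hβ hα, cubic_bounded h3 hα hβ (by simpa using hα)⟩
  have main : ∀ α β : L, (1 < ‖α‖ ∨ 1 < ‖β‖) → ‖β‖ = ‖α‖ ^ 3 → 1 < ‖α‖ := by
    intro α β hbig heq
    rcases hbig with h | h
    · exact h
    · by_contra hc
      push_neg at hc
      have : ‖α‖ ^ 3 ≤ 1 := pow_le_one₀ (norm_nonneg α) hc
      rw [heq] at h
      linarith
  refine ⟨?_, ?_, ?_, ?_⟩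
  · ext q
    obtain ⟨α, β⟩ := q
    simp only [Set.mem_setOf_eq, Set.mem_prod, Metric.mem_closedBall, dist_zero_right]
    constructor
    · rintro ⟨hK, hK'⟩
      by_contra hc
      push_neg at hc
      have hbig : 1 < ‖α‖ ∨ 1 < ‖β‖ := by
        rcases le_or_gt ‖α‖ 1 with h | h
        · exact Or.inr (lt_of_not_ge fun h' => absurd (hc h) (not_lt.mpr h'))
        · exact Or.inl h
      rcases eq_or_ne ‖β‖ (‖α‖ ^ 3) with heq | hne
      · have hα1 : 1 < ‖α‖ := main α β hbig heq
        rcases one_escapes h3 h4 heq hα1 with h | h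
        · exact h hK
        · exact h hK'
      · exact (both_escape h2 h3 hne hbig).1 hK
    · rintro ⟨hα, hβ⟩
      exact bidisk α β hα hβ
  · rintro ⟨α, β⟩ ⟨hnot, hne⟩
    simp only [Set.mem_setOf_eq] at *
    have hbig : 1 < ‖α‖ ∨ 1 < ‖β‖ := by
      by_contra hc
      push_neg at hc
      exact hnot (bidisk α β hc.1 hc.2)
    exact both_escape h2 h3 (Ne.symm hne) hbig
  · rintro ⟨α, β⟩ ⟨hK, hK'⟩
    simp only [Set.mem_setOf_eq] at *
    have hbig : 1 < ‖α‖ ∨ 1 < ‖β‖ := by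
      by_contra hc
      push_neg at hc
      exact hK' (bidisk α β hc.1 hc.2).2
    have heq : ‖β‖ = ‖α‖ ^ 3 := by
      by_contra hne
      exact (both_escape h2 h3 hne hbig).1 hK
    have hα1 : 1 < ‖α‖ := main α β hbig heq
    refine ⟨one_lt_pow₀ hα1 (by norm_num), heq.symm, ?_⟩
    have := endgame h3 hK hα1 heq
    rwa [cubic_eval_pos] at this
  · rintro ⟨α, β⟩ ⟨hK', hK⟩
    simp only [Set.mem_setOf_eq] at *
    have hbig : 1 < ‖α‖ ∨ 1 < ‖β‖ := by
      by_contra hc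
      push_neg at hc
      exact hK (bidisk α β hc.1 hc.2).1
    have heq : ‖β‖ = ‖α‖ ^ 3 := by
      by_contra hne
      exact (both_escape h2 h3 hne hbig).2 hK'
    have hα1 : 1 < ‖α‖ := main α β hbig heq
    refine ⟨one_lt_pow₀ hα1 (by norm_num), heq.symm, ?_⟩
    have := endgame h3 hK' hα1 heq
    rwa [cubic_eval_neg] at this
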